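/- arXiv:2002.11321 — 8 statements merged into one kernel-verified Lean document; each statement's English description precedes it below -/
import Mathlib

section
/- Unique decoding of Reed–Solomon codes with errors and erasures (sufficiency of the condition n − b ≥ 2c + d, used as the correctness guarantee of the decoder DEC): let b, c, d, n be natural numbers with n ≥ b + 2c + d, and let f and g be polynomials over F of degree less than b. Suppose there exist a set E ⊆ Fin n with |E| ≤ d (the erased positions) and a function r : Fin n → F (the received word) such that the number of indices i ∉ E with f(α i) ≠ r(i) is at most c, and the number of indices i ∉ E with g(α i) ≠ r(i) is at most c. Then f = g. -/
/-- Unique decoding of (n,b) Reed–Solomon codes with at most `c` errors and `d` erasures,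
assuming `n ≥ b + 2c + d`.  Messages are polynomials of degree `< b`, evaluated at the
`n` distinct points `α 0, …, α (n-1)`.  If a received word `r` with erased positions `E`
(`|E| ≤ d`) disagrees with the codeword of `f` in at most `c` non-erased positions, and
likewise for `g`, then `f = g`. -/
theorem rs_unique_decoding
    {F : Type*} [Field F] {n b c d : ℕ}
    (α : Fin n → F) (hα : Function.Injective α)
    (hn : b + 2 * c + d ≤ n)
    (f g : Polynomial F)
    (hf : f.degree < (b : WithBot ℕ)) (hg : g.degree < (b : WithBot ℕ))
    (E : Set (Fin n)) (hE : E.ncard ≤ d)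
    (r : Fin n → F)
    (hfr : {i : Fin n | i ∉ E ∧ f.eval (α i) ≠ r i}.ncard ≤ c)
    (hgr : {i : Fin n | i ∉ E ∧ g.eval (α i) ≠ r i}.ncard ≤ c) :
    f = g := by
  classical
  by_contra hne
  have hsub : f - g ≠ 0 := sub_ne_zero.mpr hne
  set S : Set (Fin n) := {i | i ∉ E ∧ f.eval (α i) = r i ∧ g.eval (α i) = r i} with hS
  have hcompl : Sᶜ ⊆ E ∪ {i : Fin n | i ∉ E ∧ f.eval (α i) ≠ r i}
      ∪ {i : Fin n | i ∉ E ∧ g.eval (α i) ≠ r i} := by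
    intro i hi
    simp only [hS, Set.mem_compl_iff, Set.mem_setOf_eq, not_and_or, not_not] at hi
    by_cases hiE : i ∈ E
    · exact Or.inl (Or.inl hiE)
    · rcases hi with h | h | h
      · exact absurd h hiE
      · exact Or.inl (Or.inr ⟨hiE, h⟩)
      · exact Or.inr ⟨hiE, h⟩
  have hScompl : Sᶜ.ncard ≤ d + c + c := by
    calc Sᶜ.ncard ≤ (E ∪ {i : Fin n | i ∉ E ∧ f.eval (α i) ≠ r i}
        ∪ {i : Fin n | i ∉ E ∧ g.eval (α i) ≠ r i}).ncard :=
          Set.ncard_le_ncard hcompl (Set.toFinite _)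
      _ ≤ (E ∪ {i : Fin n | i ∉ E ∧ f.eval (α i) ≠ r i}).ncard
          + {i : Fin n | i ∉ E ∧ g.eval (α i) ≠ r i}.ncard :=
          Set.ncard_union_le _ _
      _ ≤ E.ncard + {i : Fin n | i ∉ E ∧ f.eval (α i) ≠ r i}.ncard
          + {i : Fin n | i ∉ E ∧ g.eval (α i) ≠ r i}.ncard := by
          gcongr; exact Set.ncard_union_le _ _
      _ ≤ d + c + c := by gcongr
  have hcardn : S.ncard + Sᶜ.ncard = n := by
    simpa using S.ncard_add_ncard_compl
  have hSb : b ≤ S.ncard := by omega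
  have hcard : Fintype.card S = S.ncard := by
    rw [Set.ncard_eq_toFinset_card' S, Set.toFinset_card]
  have hdeg : (f - g).natDegree < b := by
    exact (Polynomial.natDegree_lt_iff_degree_lt hsub).mpr
      (lt_of_le_of_lt (Polynomial.degree_sub_le f g) (max_lt hf hg))
  have := Polynomial.eq_zero_of_natDegree_lt_card_of_eval_eq_zero (f - g)
    (f := fun i : S => α i) (hα.comp Subtype.val_injective)
    (fun i => by
      obtain ⟨i, hiE, hfi, hgi⟩ := i
      simp [Polynomial.eval_sub, hfi, hgi])
    (by rw [hcard]; omega)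
  exact hsub this
end

section
/- Necessity of the condition n − b ≥ 2c + d for decoding Reed–Solomon codes with c errors and d erasures: let b, c, d, n be natural numbers with b ≥ 1 and n < b + 2c + d. Then there exist polynomials f ≠ g over F, each of degree less than b, a set E ⊆ Fin n with |E| ≤ d, and a function r : Fin n → F such that the number of indices i ∉ E with f(α i) ≠ r(i) is at most c and the number of indices i ∉ E with g(α i) ≠ r(i) is at most c; that is, the received word r with erasures E is consistent with two distinct messages. -/
open Polynomial

lemma rs_aux_card {n : ℕ} (P : Fin n → Prop) [DecidablePred P] (a k : ℕ)
    (h : ∀ i, P i → a ≤ i.val ∧ i.val < a + k) :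
    {i : Fin n | P i}.ncard ≤ k := by
  have : {i : Fin n | P i} = ↑(Finset.univ.filter P) := by
    ext i; simp
  rw [this, Set.ncard_coe_finset]
  calc (Finset.univ.filter P).card
      ≤ (Finset.Ico a (a + k)).card := by
        apply Finset.card_le_card_of_injOn (fun i => i.val)
        · intro i hi
          simp only [Finset.mem_coe, Finset.mem_filter] at hi
          simpa [Finset.mem_Ico] using h i hi.2
        · intro i _ j _ hij
          exact Fin.val_injective hij
    _ = k := by simp

/-- Necessity of `n ≥ b + 2c + d` for decoding (n,b) Reed–Solomon codes with `c` errors and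
`d` erasures: if `b ≥ 1` and `n < b + 2c + d`, then there exist two distinct messages
(polynomials of degree `< b`), an erasure set `E` with `|E| ≤ d`, and a received word `r`
consistent (up to `c` errors outside `E`) with both messages. -/
theorem rs_decoding_necessity
    {F : Type*} [Field F] {n b c d : ℕ}
    (α : Fin n → F) (hα : Function.Injective α)
    (hb : 1 ≤ b) (hn : n < b + 2 * c + d) :
    ∃ f g : Polynomial F, f ≠ g ∧
      f.degree < (b : WithBot ℕ) ∧ g.degree < (b : WithBot ℕ) ∧
      ∃ E : Set (Fin n), E.ncard ≤ d ∧
        ∃ r : Fin n → F,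
          {i : Fin n | i ∉ E ∧ f.eval (α i) ≠ r i}.ncard ≤ c ∧
          {i : Fin n | i ∉ E ∧ g.eval (α i) ≠ r i}.ncard ≤ c := by
  classical
  set s := min n (b - 1) with hs
  set S : Finset (Fin n) := Finset.univ.filter (fun i => i.val < s) with hS
  set g : Polynomial F := ∏ i ∈ S, (X - C (α i)) with hg
  have hmonic : g.Monic := monic_prod_of_monic _ _ (fun i _ => monic_X_sub_C _)
  have hScard : S.card ≤ s := by
    calc S.card ≤ (Finset.Ico 0 (0 + s)).card := by
          apply Finset.card_le_card_of_injOn (fun i => i.val)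
          · intro i hi
            simp only [hS, Finset.mem_coe, Finset.mem_filter] at hi
            simp [Finset.mem_Ico, hi.2]
          · intro i _ j _ hij
            exact Fin.val_injective hij
      _ = s := by simp
  have hgdeg : g.natDegree ≤ s := by
    have := Polynomial.natDegree_prod_le S (fun i => X - C (α i))
    refine le_trans this ?_
    calc ∑ i ∈ S, (X - C (α i)).natDegree ≤ ∑ _i ∈ S, 1 := by
          apply Finset.sum_le_sum
          intro i _
          simp [natDegree_X_sub_C]
      _ = S.card := by simp
      _ ≤ s := hScard
  have hsb : s < b := by omega
  have hgdeg' : g.degree < (b : WithBot ℕ) := by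
    calc g.degree ≤ (g.natDegree : WithBot ℕ) := degree_le_natDegree
      _ < (b : WithBot ℕ) := by exact_mod_cast lt_of_le_of_lt hgdeg hsb
  refine ⟨0, g, ?_, ?_, hgdeg', ?_⟩
  · intro h
    exact hmonic.ne_zero h.symm
  · rw [Polynomial.degree_zero]; exact WithBot.bot_lt_coe b
  · refine ⟨{i : Fin n | s + 2 * c ≤ i.val}, ?_, fun i => if s + c ≤ i.val then g.eval (α i) else 0, ?_, ?_⟩
    · apply rs_aux_card _ (s + 2 * c) d
      intro i hi
      exact ⟨hi, by omega⟩
    · apply rs_aux_card _ (s + c) c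
      intro i hi
      simp only [Set.mem_setOf_eq, not_le, eval_zero] at hi
      obtain ⟨hi1, hi2⟩ := hi
      by_cases h : s + c ≤ i.val
      · exact ⟨h, by omega⟩
      · simp [h] at hi2
    · apply rs_aux_card _ s c
      intro i hi
      simp only [Set.mem_setOf_eq, not_le] at hi
      obtain ⟨hi1, hi2⟩ := hi
      by_cases h : s + c ≤ i.val
      · simp [h] at hi2
      · constructor
        · by_contra hlt
          push_neg at hlt
          apply hi2
          have hiS : i ∈ S := by simp [hS, hlt]
          have : g.eval (α i) = 0 := by
            rw [hg, eval_prod]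
            apply Finset.prod_eq_zero hiS
            simp
          simp [h, this]
        · omega
end

section
/- Exclusion bound in the STAR protocol (core counting argument of the paper's Lemma on obtaining a nonempty set E): let A ⊆ V be an independent set of H, let M be a maximum matching of H with support N, and let T = {v ∈ V \ N : there exists an edge {x,y} ∈ M such that v is adjacent to x and v is adjacent to y in H}. Then |A ∩ (N ∪ T)| ≤ |V \ A|; that is, for every A-vertex excluded from V \ (N ∪ T) there is a distinct non-A-vertex also excluded. -/
/-- A matching of a simple graph `H`: a finite set of edges of `H` that are pairwise
vertex-disjoint. -/
def IsMatching {V : Type*} (H : SimpleGraph V) (M : Finset (Sym2 V)) : Prop :=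
  (↑M : Set (Sym2 V)) ⊆ H.edgeSet ∧
    ∀ e ∈ M, ∀ e' ∈ M, e ≠ e' → ∀ v : V, v ∈ e → v ∉ e'

/-- A maximum matching: a matching such that no matching of `H` has strictly more edges. -/
def IsMaximumMatching {V : Type*} (H : SimpleGraph V) (M : Finset (Sym2 V)) : Prop :=
  IsMatching H M ∧ ∀ M' : Finset (Sym2 V), IsMatching H M' → M'.card ≤ M.card

/-- The support of a matching: the set of vertices covered by its edges. -/
def matchingSupport {V : Type*} (M : Finset (Sym2 V)) : Set V :=
  {v | ∃ e ∈ M, v ∈ e}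

/-- The set `T` of the STAR protocol: vertices uncovered by the matching `M` that are
adjacent (in `H`) to both endpoints of some edge of `M`. -/
def starT {V : Type*} (H : SimpleGraph V) (M : Finset (Sym2 V)) : Set V :=
  {v | v ∉ matchingSupport M ∧ ∃ x y : V, s(x, y) ∈ M ∧ H.Adj v x ∧ H.Adj v y}

lemma edge_unique {V : Type*} {H : SimpleGraph V} {M : Finset (Sym2 V)}
    (hm : IsMatching H M) {e e' : Sym2 V} (he : e ∈ M) (he' : e' ∈ M)
    {v : V} (hv : v ∈ e) (hv' : v ∈ e') : e = e' := by
  by_contra h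
  exact hm.2 e he e' he' h v hv hv'

lemma augment {V : Type*} {H : SimpleGraph V} {M : Finset (Sym2 V)}
    (hM : IsMaximumMatching H M) {x y v w : V}
    (he : s(x,y) ∈ M) (hv : v ∉ matchingSupport M) (hw : w ∉ matchingSupport M)
    (hvw : v ≠ w) (hvx : H.Adj v x) (hvy : H.Adj v y)
    (hwx : H.Adj w x) (hwy : H.Adj w y) : False := by
  classical
  have hm := hM.1
  have hAdjxy : H.Adj x y := hm.1 he
  have hxy : x ≠ y := hAdjxy.ne
  have hvM : ∀ e ∈ M, v ∉ e := fun e heM hve => hv ⟨e, heM, hve⟩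
  have hwM : ∀ e ∈ M, w ∉ e := fun e heM hwe => hw ⟨e, heM, hwe⟩
  have hvx' : v ≠ x := fun h => hvM _ he (by simp [h])
  have hvy' : v ≠ y := fun h => hvM _ he (by simp [h])
  have hwx' : w ≠ x := fun h => hwM _ he (by simp [h])
  have hwy' : w ≠ y := fun h => hwM _ he (by simp [h])
  have hxM : ∀ e ∈ M, x ∈ e → e = s(x,y) := fun e heM hxe =>
    edge_unique hm heM he hxe (by simp)
  have hyM : ∀ e ∈ M, y ∈ e → e = s(x,y) := fun e heM hye =>
    edge_unique hm heM he hye (by simp)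
  set M' : Finset (Sym2 V) := insert s(v,x) (insert s(w,y) (M.erase s(x,y))) with hM'def
  have hvxM : s(v,x) ∉ M := fun h => hvM _ h (by simp)
  have hwyM : s(w,y) ∉ M := fun h => hwM _ h (by simp)
  have hne12 : s(v,x) ≠ s(w,y) := by
    intro h
    rw [Sym2.eq_iff] at h
    rcases h with ⟨h1, _⟩ | ⟨h1, _⟩
    · exact hvw h1
    · exact hvy' h1
  have hmem : ∀ e ∈ M', e = s(v,x) ∨ e = s(w,y) ∨ (e ∈ M ∧ e ≠ s(x,y)) := by
    intro e heM'
    simp only [hM'def, Finset.mem_insert, Finset.mem_erase] at heM'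
    tauto
  have hmatch : IsMatching H M' := by
    constructor
    · intro e heM'
      rcases hmem e heM' with h | h | ⟨h, _⟩
      · subst h; exact hvx
      · subst h; exact hwy
      · exact hm.1 h
    · intro e heM' e' heM'' hne u hue hue'
      rcases hmem e heM' with h | h | ⟨h, h2⟩ <;>
        rcases hmem e' heM'' with h' | h' | ⟨h', h2'⟩
      · exact hne (h.trans h'.symm)
      · subst h; subst h'
        simp only [Sym2.mem_iff] at hue hue'
        rcases hue with rfl | rfl <;> rcases hue' with h | h
        · exact hvw h
        · exact hvy' h
        · exact hwx' h.symm
        · exact hxy h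
      · subst h
        simp only [Sym2.mem_iff] at hue
        rcases hue with rfl | rfl
        · exact hvM _ h' hue'
        · exact h2' (hxM _ h' hue')
      · subst h; subst h'
        simp only [Sym2.mem_iff] at hue hue'
        rcases hue with rfl | rfl <;> rcases hue' with h | h
        · exact hvw h.symm
        · exact hwx' h
        · exact hvy' h.symm
        · exact hxy h.symm
      · exact hne (h.trans h'.symm)
      · subst h
        simp only [Sym2.mem_iff] at hue
        rcases hue with rfl | rfl
        · exact hwM _ h' hue'
        · exact h2' (hyM _ h' hue')
      · subst h'
        simp only [Sym2.mem_iff] at hue'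
        rcases hue' with rfl | rfl
        · exact hvM _ h hue
        · exact h2 (hxM _ h hue)
      · subst h'
        simp only [Sym2.mem_iff] at hue'
        rcases hue' with rfl | rfl
        · exact hwM _ h hue
        · exact h2 (hyM _ h hue)
      · by_cases hee : e = e'
        · exact hne hee
        · exact hm.2 e h e' h' hee u hue hue'
  have hcard : M'.card = M.card + 1 := by
    have h1 : s(v,x) ∉ insert s(w,y) (M.erase s(x,y)) := by
      simp only [Finset.mem_insert, Finset.mem_erase, not_or]
      exact ⟨hne12, fun h => hvxM h.2⟩
    have h2 : s(w,y) ∉ M.erase s(x,y) := fun h => hwyM (Finset.mem_of_mem_erase h)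
    rw [hM'def, Finset.card_insert_of_notMem h1, Finset.card_insert_of_notMem h2,
      Finset.card_erase_of_mem he]
    have : 1 ≤ M.card := Finset.card_pos.mpr ⟨_, he⟩
    omega
  have := hM.2 M' hmatch
  omega

/-- Exclusion bound in the STAR protocol: if `A` is an independent set of `H`, `M` is a
maximum matching of `H` with support `N`, and `T` is the set of uncovered vertices adjacent
to both endpoints of some matching edge, then `|A ∩ (N ∪ T)| ≤ |V \ A|`. -/
theorem star_exclusion_bound {V : Type*} [Fintype V]
    (H : SimpleGraph V) (A : Set V)
    (hA : ∀ a ∈ A, ∀ b ∈ A, a ≠ b → ¬ H.Adj a b)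
    (M : Finset (Sym2 V)) (hM : IsMaximumMatching H M) :
    (A ∩ (matchingSupport M ∪ starT H M)).ncard ≤ (Aᶜ).ncard := by
  classical
  set f : V → V := fun v =>
    if h : v ∈ matchingSupport M then Sym2.Mem.other h.choose_spec.2
    else if h : ∃ x y : V, s(x,y) ∈ M ∧ H.Adj v x ∧ H.Adj v y then h.choose
    else v with hfdef
  have hfN : ∀ v ∈ matchingSupport M, s(v, f v) ∈ M := by
    intro v hv
    have hfv : f v = Sym2.Mem.other hv.choose_spec.2 := by
      simp only [hfdef]
      rw [dif_pos hv]
    rw [hfv, Sym2.other_spec hv.choose_spec.2]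
    exact hv.choose_spec.1
  have hfT : ∀ v ∈ starT H M,
      ∃ y, s(f v, y) ∈ M ∧ H.Adj v (f v) ∧ H.Adj v y := by
    intro v hv
    obtain ⟨hv1, hv2⟩ := hv
    have hfv : f v = hv2.choose := by
      simp only [hfdef]
      rw [dif_neg hv1, dif_pos hv2]
    rw [hfv]
    exact hv2.choose_spec
  apply Set.ncard_le_ncard_of_injOn f
  · rintro a ⟨haA, haNT⟩
    by_cases haN : a ∈ matchingSupport M
    · have hedge := hfN a haN
      have hadj : H.Adj a (f a) := hM.1.1 hedge
      intro hfa
      exact hA a haA (f a) hfa hadj.ne hadj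
    · have haT : a ∈ starT H M := haNT.resolve_left haN
      obtain ⟨y, _, hadj, _⟩ := hfT a haT
      intro hfa
      exact hA a haA (f a) hfa hadj.ne hadj
  · rintro a ⟨haA, haNT⟩ b ⟨hbA, hbNT⟩ hab
    by_cases haN : a ∈ matchingSupport M <;> by_cases hbN : b ∈ matchingSupport M
    · have hea := hfN a haN
      have heb := hfN b hbN
      rw [hab] at hea
      have := edge_unique hM.1 hea heb (v := f b) (by simp) (by simp)
      exact Sym2.congr_left.mp this
    · exfalso
      have hbT : b ∈ starT H M := hbNT.resolve_left hbN
      obtain ⟨y, heb, hbx, hby⟩ := hfT b hbT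
      have hea := hfN a haN
      rw [hab] at hea
      have heq := edge_unique hM.1 hea heb (v := f b) (by simp) (by simp)
      have hab' : a ≠ b := fun h => hbN (h ▸ haN)
      have haFB : H.Adj b a := by
        have hmem : a ∈ s(f b, y) := heq ▸ (by simp : a ∈ s(a, f b))
        simp only [Sym2.mem_iff] at hmem
        rcases hmem with rfl | rfl
        · exact hbx
        · exact hby
      exact hA b hbA a haA hab'.symm haFB
    · exfalso
      have haT : a ∈ starT H M := haNT.resolve_left haN
      obtain ⟨y, hea, hax, hay⟩ := hfT a haT
      have heb := hfN b hbN
      rw [← hab] at heb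
      have heq := edge_unique hM.1 heb hea (v := f a) (by simp) (by simp)
      have hab' : a ≠ b := fun h => haN (h ▸ hbN)
      have hadj : H.Adj a b := by
        have hmem : b ∈ s(f a, y) := heq ▸ (by simp : b ∈ s(b, f a))
        simp only [Sym2.mem_iff] at hmem
        rcases hmem with rfl | rfl
        · exact hax
        · exact hay
      exact hA a haA b hbA hab' hadj
    · have haT : a ∈ starT H M := haNT.resolve_left haN
      have hbT : b ∈ starT H M := hbNT.resolve_left hbN
      obtain ⟨y, hea, hax, hay⟩ := hfT a haT
      obtain ⟨y', heb, hbx, hby⟩ := hfT b hbT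
      rw [hab] at hea hax
      have heq := edge_unique hM.1 hea heb (v := f b) (by simp) (by simp)
      have hyy : y = y' := Sym2.congr_right.mp heq
      subst hyy
      by_contra hne
      exact augment hM heb haN hbN hne hax hay hbx hby
end

section
/- If all honest parties hold the same input then the set C computed by the STAR protocol contains at least t+1 honest parties: let n ≥ 3t + 1, let A ⊆ V be an independent set of H with |V \ A| ≤ t (A is the set of honest parties, which form a clique in the agreement graph G, the complement of H), let M be a maximum matching of H with support N, and let T = {v ∈ V \ N : there exists an edge {x,y} ∈ M such that v is adjacent to x and v is adjacent to y in H}. Then the set C = V \ (N ∪ T) satisfies |A ∩ C| ≥ t + 1, and in particular |C| ≥ n − 2t. -/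
/-- The set `C` computed by the STAR protocol: `C = V \ (N ∪ T)`. -/
def starC {V : Type*} (H : SimpleGraph V) (M : Finset (Sym2 V)) : Set V :=
  (matchingSupport M ∪ starT H M)ᶜ

/-- If the honest parties `A` (an independent set of `H` of size at least `n - t`, i.e.
`|V \ A| ≤ t`, forming a clique in the agreement graph, the complement of `H`) agree with
each other and `n ≥ 3t + 1`, then the set `C = V \ (N ∪ T)` computed by the STAR protocol
contains at least `t + 1` honest parties; in particular `|C| ≥ n - 2t`. -/
theorem star_C_contains_honest {V : Type*} [Fintype V] {n t : ℕ}
    (hn : Fintype.card V = n) (hnt : 3 * t + 1 ≤ n)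
    (H : SimpleGraph V) (A : Set V)
    (hA : ∀ a ∈ A, ∀ b ∈ A, a ≠ b → ¬ H.Adj a b)
    (hAc : (Aᶜ).ncard ≤ t)
    (M : Finset (Sym2 V)) (hM : IsMaximumMatching H M) :
    t + 1 ≤ (A ∩ starC H M).ncard ∧ n - 2 * t ≤ (starC H M).ncard := by
  classical
  obtain ⟨hMm, hMmax⟩ := hM
  -- Step 1: M.card ≤ Aᶜ.ncard
  set g : Sym2 V → V := fun e => if h : ∃ u, u ∈ e ∧ u ∉ A then h.choose else e.out.1 with hg
  have hgspec : ∀ e ∈ M, g e ∈ e ∧ g e ∉ A := by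
    intro e he
    have hedge := hMm.1 he
    have hex : ∃ u, u ∈ e ∧ u ∉ A := by
      induction e using Sym2.ind with
      | _ x y =>
        rw [SimpleGraph.mem_edgeSet] at hedge
        by_contra h
        push_neg at h
        exact hA x (h x (by simp)) y (h y (by simp)) hedge.ne hedge
    simp only [hg, dif_pos hex]
    exact hex.choose_spec
  have hMcard : M.card ≤ Aᶜ.ncard := by
    rw [← Set.ncard_coe_finset]
    refine Set.ncard_le_ncard_of_injOn g (fun e he => (hgspec e (by simpa using he)).2)
      ?_
    intro e he e' he' hgee
    by_contra hne
    exact hMm.2 e (by simpa using he) e' (by simpa using he') hne (g e)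
      (hgspec e (by simpa using he)).1 (hgee ▸ (hgspec e' (by simpa using he')).1)
  -- Step 2: the map from A ∩ (N ∪ T) to M
  set f : V → Sym2 V := fun v =>
    if h : ∃ e ∈ M, v ∈ e then h.choose
    else if h2 : ∃ x y, s(x, y) ∈ M ∧ H.Adj v x ∧ H.Adj v y
      then s(h2.choose, h2.choose_spec.choose) else s(v, v) with hf
  have hfN : ∀ v ∈ matchingSupport M, f v ∈ M ∧ v ∈ f v := by
    intro v hv
    have hv' : ∃ e ∈ M, v ∈ e := hv
    simp only [hf, dif_pos hv']
    exact ⟨hv'.choose_spec.1, hv'.choose_spec.2⟩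
  have hfT : ∀ v ∈ starT H M, ∃ x y, f v = s(x, y) ∧ s(x, y) ∈ M ∧ H.Adj v x ∧ H.Adj v y := by
    intro v hv
    obtain ⟨hv1, hv2⟩ := hv
    have hv1' : ¬ ∃ e ∈ M, v ∈ e := hv1
    simp only [hf, dif_neg hv1', dif_pos hv2]
    exact ⟨hv2.choose, hv2.choose_spec.choose, rfl, hv2.choose_spec.choose_spec⟩
  -- key injectivity
  have hS : (A ∩ (matchingSupport M ∪ starT H M)).ncard ≤ M.card := by
    rw [← Set.ncard_coe_finset]
    refine Set.ncard_le_ncard_of_injOn f ?_ ?_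
    · rintro a ⟨-, ha⟩
      rcases ha with ha | ha
      · exact (hfN a ha).1
      · obtain ⟨x, y, hxy, hm, -⟩ := hfT a ha
        rw [hxy]; exact hm
    · -- injectivity
      rintro v ⟨hvA, hv⟩ w ⟨hwA, hw⟩ hfvw
      by_contra hvw
      -- helper: mixed case N/T is impossible
      have mixed : ∀ p q : V, p ∈ A → q ∈ A → p ≠ q → p ∈ matchingSupport M →
          q ∈ starT H M → f p = f q → False := by
        intro p q hpA hqA hpq hp hq hpqf
        obtain ⟨hp1, hp2⟩ := hfN p hp
        obtain ⟨x, y, hxy, hm, hqx, hqy⟩ := hfT q hq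
        rw [hpqf, hxy] at hp2
        rcases Sym2.mem_iff.mp hp2 with rfl | rfl
        · exact hA q hqA p hpA (Ne.symm hpq) hqx
        · exact hA q hqA p hpA (Ne.symm hpq) hqy
      rw [Set.mem_union] at hv hw
      rcases hv with hv | hv <;> rcases hw with hw | hw
      · -- both in support
        obtain ⟨hv1, hv2⟩ := hfN v hv
        obtain ⟨hw1, hw2⟩ := hfN w hw
        rw [hfvw] at hv2
        have hedge := hMm.1 hw1
        obtain ⟨x, y, hxy⟩ : ∃ x y, f w = s(x, y) := by
          induction (f w) using Sym2.ind with
          | _ a b => exact ⟨a, b, rfl⟩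
        rw [hxy] at hv2 hw2 hedge
        rw [SimpleGraph.mem_edgeSet] at hedge
        rcases Sym2.mem_iff.mp hv2 with rfl | rfl <;>
          rcases Sym2.mem_iff.mp hw2 with rfl | rfl
        · exact hvw rfl
        · exact hA v hvA w hwA hvw hedge
        · exact hA v hvA w hwA hvw hedge.symm
        · exact hvw rfl
      · exact mixed v w hvA hwA hvw hv hw hfvw
      · exact mixed w v hwA hvA (Ne.symm hvw) hw hv hfvw.symm
      · -- both in T: contradiction with maximality
        have hvN := hv.1
        have hwN := hw.1
        obtain ⟨x, y, hvxy, hmxy, hvx, hvy⟩ := hfT v hv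
        obtain ⟨x', y', hwxy, hmxy', hwx, hwy⟩ := hfT w hw
        have hee : s(x, y) = s(x', y') := by rw [← hvxy, ← hwxy, hfvw]
        have hwx2 : H.Adj w x ∧ H.Adj w y := by
          rcases Sym2.eq_iff.mp hee with ⟨rfl, rfl⟩ | ⟨rfl, rfl⟩
          · exact ⟨hwx, hwy⟩
          · exact ⟨hwy, hwx⟩
        obtain ⟨hwx, hwy⟩ := hwx2
        have hvsup : ∀ e ∈ M, v ∉ e := by
          intro e he hve; exact hvN ⟨e, he, hve⟩
        have hwsup : ∀ e ∈ M, w ∉ e := by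
          intro e he hwe; exact hwN ⟨e, he, hwe⟩
        have hxmem : x ∈ s(x, y) := by simp
        have hymem : y ∈ s(x, y) := by simp
        have hxy_dis : ∀ e ∈ M, e ≠ s(x, y) → x ∉ e ∧ y ∉ e := by
          intro e he hne
          exact ⟨hMm.2 _ hmxy _ he (Ne.symm hne) x hxmem,
                 hMm.2 _ hmxy _ he (Ne.symm hne) y hymem⟩
        have hvne_x : v ≠ x := fun h => hvsup _ hmxy (h ▸ hxmem)
        have hvne_y : v ≠ y := fun h => hvsup _ hmxy (h ▸ hymem)
        have hwne_x : w ≠ x := fun h => hwsup _ hmxy (h ▸ hxmem)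
        have hwne_y : w ≠ y := fun h => hwsup _ hmxy (h ▸ hymem)
        set M' : Finset (Sym2 V) := insert s(v, x) (insert s(w, y) (M.erase s(x, y))) with hM'
        have hvx_mem : ∀ u, u ∈ s(v, x) → u = v ∨ u = x := fun u hu => Sym2.mem_iff.mp hu
        have hwy_mem : ∀ u, u ∈ s(w, y) → u = w ∨ u = y := fun u hu => Sym2.mem_iff.mp hu
        have hdisj1 : ∀ u, u ∈ s(v, x) → u ∉ s(w, y) := by
          intro u hu hu'
          rcases hvx_mem u hu with rfl | rfl <;> rcases hwy_mem u hu' with h | h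
          · exact hvw h
          · exact hvne_y h
          · exact hwne_x h.symm
          · exact (hMm.1 hmxy).ne h
        have hdisj2 : ∀ e ∈ M.erase s(x, y), ∀ u, u ∈ s(v, x) → u ∉ e := by
          intro e he u hu hue
          obtain ⟨hne, heM⟩ := Finset.mem_erase.mp he
          rcases hvx_mem u hu with rfl | rfl
          · exact hvsup e heM hue
          · exact (hxy_dis e heM hne).1 hue
        have hdisj3 : ∀ e ∈ M.erase s(x, y), ∀ u, u ∈ s(w, y) → u ∉ e := by
          intro e he u hu hue
          obtain ⟨hne, heM⟩ := Finset.mem_erase.mp he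
          rcases hwy_mem u hu with rfl | rfl
          · exact hwsup e heM hue
          · exact (hxy_dis e heM hne).2 hue
        have hM'match : IsMatching H M' := by
          constructor
          · intro e he
            simp only [hM', Finset.coe_insert, Set.mem_insert_iff, Finset.mem_coe] at he
            rcases he with rfl | rfl | he
            · exact hvx
            · exact hwy
            · exact hMm.1 (Finset.mem_of_mem_erase he)
          · intro e he e' he' hne u hue hue'
            simp only [hM', Finset.mem_insert] at he he'
            rcases he with rfl | rfl | he <;> rcases he' with rfl | rfl | he'
            · exact hne rfl
            · exact hdisj1 u hue hue'
            · exact hdisj2 e' he' u hue hue'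
            · exact hdisj1 u hue' hue
            · exact hne rfl
            · exact hdisj3 e' he' u hue hue'
            · exact hdisj2 e he u hue' hue
            · exact hdisj3 e he u hue' hue
            · exact hMm.2 e (Finset.mem_of_mem_erase he) e' (Finset.mem_of_mem_erase he')
                hne u hue hue'
        have h1 : s(w, y) ∉ M.erase s(x, y) := by
          intro h
          exact hwsup _ (Finset.mem_of_mem_erase h) (by simp)
        have h2 : s(v, x) ∉ insert s(w, y) (M.erase s(x, y)) := by
          intro h
          rcases Finset.mem_insert.mp h with h | h
          · exact hdisj1 v (by simp) (h ▸ (by simp : v ∈ s(v,x)))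
          · exact hvsup _ (Finset.mem_of_mem_erase h) (by simp)
        have hcard : M'.card = M.card + 1 := by
          rw [hM', Finset.card_insert_of_notMem h2, Finset.card_insert_of_notMem h1,
            Finset.card_erase_of_mem hmxy]
          have : 1 ≤ M.card := Finset.card_pos.mpr ⟨_, hmxy⟩
          omega
        have := hMmax M' hM'match
        omega
  -- Step 3: arithmetic
  have hcardV : (Fintype.card V : ℕ) = n := hn
  have hAcard : n - t ≤ A.ncard := by
    have := Set.ncard_add_ncard_compl A
    rw [Nat.card_eq_fintype_card, hn] at this
    omega
  have hsplit : (A ∩ (matchingSupport M ∪ starT H M)).ncard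
      + (A \ (matchingSupport M ∪ starT H M)).ncard = A.ncard :=
    Set.ncard_inter_add_ncard_diff_eq_ncard A _
  have hAC : A ∩ starC H M = A \ (matchingSupport M ∪ starT H M) := by
    rw [starC, Set.diff_eq]
  have hkey : n - 2 * t ≤ (A ∩ starC H M).ncard := by
    rw [hAC]
    omega
  have hsub : (A ∩ starC H M).ncard ≤ (starC H M).ncard :=
    Set.ncard_le_ncard Set.inter_subset_right
  exact ⟨by omega, by omega⟩
end

section
/- Honest parties in the set C of an (n,t)-star hold the same message: let (C, D) be an (n,t)-star, i.e., C ⊆ D ⊆ Fin n with |C| ≥ n − 2t and |D| ≥ n − t such that adj i j holds for every i ∈ C and j ∈ D with i ≠ j. Then for all honest parties i, j ∈ C (i.e., i, j ∈ C \ B), f_i = f_j. -/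
/-- Honest parties in the set `C` of an `(n,t)`-star hold the same message.
Parties are indexed by `Fin n` with `n ≥ 3t + 1`; `B` (with `|B| ≤ t`) is the set of
Byzantine parties.  Each party `i` holds a polynomial `f i` of degree at most `t` over a
field `F` (its message, encoded as the `(n, t+1)` Reed–Solomon codeword at the distinct
points `x 0, …, x (n-1)`).  The agreement graph `adj` is symmetric and irreflexive, and
whenever two honest parties `i, j` are adjacent, their codewords agree in positions `i`
and `j`.  If `(C, D)` is an `(n,t)`-star (`C ⊆ D ⊆ Fin n`, `|C| ≥ n - 2t`, `|D| ≥ n - t`,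
every pair in `C × D` adjacent), then all honest parties in `C` hold the same polynomial. -/
theorem star_C_honest_same_message
    {F : Type*} [Field F] {n t : ℕ} (hn : 3 * t + 1 ≤ n)
    (B : Set (Fin n)) (hB : B.ncard ≤ t)
    (x : Fin n → F) (hx : Function.Injective x)
    (f : Fin n → Polynomial F) (hdeg : ∀ i, (f i).degree ≤ (t : WithBot ℕ))
    (adj : Fin n → Fin n → Prop)
    (hsymm : ∀ i j, adj i j → adj j i) (hirr : ∀ i, ¬ adj i i)
    (hagree : ∀ i ∉ B, ∀ j ∉ B, adj i j →
      (f i).eval (x j) = (f j).eval (x j) ∧ (f i).eval (x i) = (f j).eval (x i))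
    (C D : Set (Fin n)) (hCD : C ⊆ D)
    (hC : n - 2 * t ≤ C.ncard) (hD : n - t ≤ D.ncard)
    (hstar : ∀ i ∈ C, ∀ j ∈ D, i ≠ j → adj i j) :
    ∀ i ∈ C, i ∉ B → ∀ j ∈ C, j ∉ B → f i = f j := by
  classical
  intro i hiC hiB j hjC hjB
  -- honest parties in D
  have hDfin : (D \ B).Finite := Set.toFinite _
  have hcardDB : t + 1 ≤ (D \ B).ncard := by
    have h1 : D.ncard ≤ (D \ B).ncard + B.ncard := by
      have : D ⊆ (D \ B) ∪ B := by
        intro k hk; by_cases hkB : k ∈ B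
        · exact Or.inr hkB
        · exact Or.inl ⟨hk, hkB⟩
      calc D.ncard ≤ ((D \ B) ∪ B).ncard := Set.ncard_le_ncard this (Set.toFinite _)
        _ ≤ (D \ B).ncard + B.ncard := Set.ncard_union_le _ _
    omega
  have key : ∀ k ∈ D \ B, (f i - f j).eval (x k) = 0 := by
    rintro k ⟨hkD, hkB⟩
    have hik : (f i).eval (x k) = (f k).eval (x k) := by
      by_cases h : i = k
      · subst h; rfl
      · exact (hagree i hiB k hkB (hstar i hiC k hkD h)).1
    have hjk : (f j).eval (x k) = (f k).eval (x k) := by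
      by_cases h : j = k
      · subst h; rfl
      · exact (hagree j hjB k hkB (hstar j hjC k hkD h)).1
    simp [hik, hjk]
  have hsub : f i - f j = 0 := by
    have hinj : Function.Injective (fun k : (D \ B : Set (Fin n)) => x k.1) :=
      fun a b hab => Subtype.ext (hx hab)
    have hcard : (f i - f j).natDegree < Fintype.card (D \ B : Set (Fin n)) := by
      have hd : (f i - f j).degree ≤ (t : WithBot ℕ) :=
        le_trans (Polynomial.degree_sub_le _ _) (max_le (hdeg i) (hdeg j))
      have hnd : (f i - f j).natDegree ≤ t := Polynomial.natDegree_le_iff_degree_le.mpr hd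
      have : Fintype.card (D \ B : Set (Fin n)) = (D \ B).ncard := by
        rw [Set.ncard_eq_toFinset_card', Set.toFinset_card]
      omega
    exact Polynomial.eq_zero_of_natDegree_lt_card_of_eval_eq_zero (f i - f j) hinj
      (fun k => key k.1 k.2) hcard
  exact sub_eq_zero.mp hsub
end

section
/- Every honest party in the set 𝓕 holds the correct piece of the codeword: let (C, D) be an (n,t)-star, i.e., C ⊆ D ⊆ Fin n with |C| ≥ n − 2t and |D| ≥ n − t such that adj i j holds for every i ∈ C and j ∈ D with i ≠ j. Then for every honest party j such that the set {k ∈ C : adj j k or k = j} has at least t + 1 elements, and every honest party i ∈ C, it holds that f_j(x j) = f_i(x j); that is, the j-th piece held by j agrees with the codeword of the common message of the honest parties in C. -/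
/-- Every honest party in the set `𝓕` holds the correct piece of the codeword.
Parties are indexed by `Fin n` with `n ≥ 3t + 1`; `B` (with `|B| ≤ t`) is the set of
Byzantine parties.  Each party `i` holds a polynomial `f i` of degree at most `t` over a
field `F`, encoded as the `(n, t+1)` Reed–Solomon codeword at the distinct points
`x 0, …, x (n-1)`.  The agreement graph `adj` is symmetric and irreflexive, and whenever
two honest parties `i, j` are adjacent, their codewords agree in positions `i` and `j`.
Let `(C, D)` be an `(n,t)`-star.  Then every honest party `j` having at least `t + 1`
neighbors in `C` (counting itself) holds the correct `j`-th piece: `f j (x j) = f i (x j)`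
for every honest `i ∈ C`. -/
theorem F_honest_correct_piece
    {F : Type*} [Field F] {n t : ℕ} (hn : 3 * t + 1 ≤ n)
    (B : Set (Fin n)) (hB : B.ncard ≤ t)
    (x : Fin n → F) (hx : Function.Injective x)
    (f : Fin n → Polynomial F) (hdeg : ∀ i, (f i).degree ≤ (t : WithBot ℕ))
    (adj : Fin n → Fin n → Prop)
    (hsymm : ∀ i j, adj i j → adj j i) (hirr : ∀ i, ¬ adj i i)
    (hagree : ∀ i ∉ B, ∀ j ∉ B, adj i j →
      (f i).eval (x j) = (f j).eval (x j) ∧ (f i).eval (x i) = (f j).eval (x i))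
    (C D : Set (Fin n)) (hCD : C ⊆ D)
    (hC : n - 2 * t ≤ C.ncard) (hD : n - t ≤ D.ncard)
    (hstar : ∀ i ∈ C, ∀ j ∈ D, i ≠ j → adj i j) :
    ∀ j ∉ B, t + 1 ≤ {k | k ∈ C ∧ (adj j k ∨ k = j)}.ncard →
      ∀ i ∈ C, i ∉ B → (f j).eval (x j) = (f i).eval (x j) := by
  classical
  -- honest parties in D are numerous
  have hDB : t + 1 ≤ (D \ B).ncard := by
    have h1 : D.ncard ≤ (D \ B).ncard + B.ncard := by
      have hsub : D ⊆ (D \ B) ∪ B := by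
        intro m hm
        by_cases hmB : m ∈ B
        · exact Or.inr hmB
        · exact Or.inl ⟨hm, hmB⟩
      calc D.ncard ≤ ((D \ B) ∪ B).ncard :=
            Set.ncard_le_ncard hsub (Set.toFinite _)
        _ ≤ (D \ B).ncard + B.ncard := Set.ncard_union_le _ _
    omega
  -- all honest parties in C hold the same polynomial
  have key : ∀ a ∈ C, a ∉ B → ∀ b ∈ C, b ∉ B → f a = f b := by
    intro a haC haB b hbC hbB
    by_cases hab : a = b
    · rw [hab]
    have hval : ∀ m ∈ D \ B, (f a - f b).eval (x m) = 0 := by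
      intro m hm
      obtain ⟨hmD, hmB⟩ := hm
      have hres : (f a).eval (x m) = (f b).eval (x m) := by
        by_cases hma : m = a
        · subst hma
          have hadj : adj m b := hstar m haC b (hCD hbC) hab
          exact (hagree m haB b hbB hadj).2
        by_cases hmb : m = b
        · subst hmb
          have hadj : adj a m := hstar a haC m (hCD hbC) hab
          exact (hagree a haB m hbB hadj).1
        · have h1 := (hagree a haB m hmB (hstar a haC m hmD (fun h => hma h.symm))).1
          have h2 := (hagree b hbB m hmB (hstar b hbC m hmD (fun h => hmb h.symm))).1
          rw [h1, h2]
      simp [hres]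
    have hsub : f a - f b = 0 := by
      apply Polynomial.eq_zero_of_natDegree_lt_card_of_eval_eq_zero'
        (f a - f b) (((D \ B).toFinite.toFinset).image x)
      · intro y hy
        simp only [Finset.mem_image, Set.Finite.mem_toFinset] at hy
        obtain ⟨m, hm, rfl⟩ := hy
        exact hval m hm
      · have hcard : (((D \ B).toFinite.toFinset).image x).card = (D \ B).ncard := by
          rw [Finset.card_image_of_injective _ hx,
            Set.ncard_eq_toFinset_card _ (D \ B).toFinite]
        have hdegab : (f a - f b).natDegree ≤ t := by
          rw [Polynomial.natDegree_le_iff_degree_le]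
          exact le_trans (Polynomial.degree_sub_le _ _) (max_le (hdeg a) (hdeg b))
        omega
    have := sub_eq_zero.mp hsub
    exact this
  intro j hjB hScard i hiC hiB
  set S : Set (Fin n) := {k | k ∈ C ∧ (adj j k ∨ k = j)} with hS
  have hex : ∃ k ∈ S, k ∉ B := by
    by_contra h
    push_neg at h
    have : S.ncard ≤ B.ncard := Set.ncard_le_ncard h (Set.toFinite _)
    omega
  obtain ⟨k, ⟨hkC, hk⟩, hkB⟩ := hex
  rcases hk with hadj | rfl
  · have h1 := (hagree j hjB k hkB hadj).2
    rw [h1, key k hkC hkB i hiC hiB]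
  · rw [key k hkC hjB i hiC hiB]
end

section
/- Honest parties in the set 𝓔 derived from an (n,t)-star hold the same message: let (C, D) be an (n,t)-star, i.e., C ⊆ D ⊆ Fin n with |C| ≥ n − 2t and |D| ≥ n − t such that adj i j holds for every i ∈ C and j ∈ D with i ≠ j. Define 𝓕 = {j : the set {k ∈ C : adj j k or k = j} has at least t + 1 elements} and 𝓔 = {j : the set {k ∈ 𝓕 : adj j k or k = j} has at least 2t + 1 elements} (a party counts as its own neighbor in these definitions). Then for all honest parties i, j ∈ 𝓔 (i.e., i, j ∈ 𝓔 \ B), f_i = f_j; moreover this common polynomial equals the common polynomial f_k of every honest k ∈ C. -/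
/-- The set `𝓕` derived from the set `C`: parties having at least `t + 1` neighbors in `C`
in the agreement graph (a party counts as its own neighbor). -/
def Fset {n : ℕ} (t : ℕ) (adj : Fin n → Fin n → Prop) (C : Set (Fin n)) : Set (Fin n) :=
  {j | t + 1 ≤ {k | k ∈ C ∧ (adj j k ∨ k = j)}.ncard}

/-- The set `𝓔` derived from `𝓕`: parties having at least `2t + 1` neighbors in `𝓕`
in the agreement graph (a party counts as its own neighbor). -/
def Eset {n : ℕ} (t : ℕ) (adj : Fin n → Fin n → Prop) (C : Set (Fin n)) : Set (Fin n) :=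
  {j | 2 * t + 1 ≤ {k | k ∈ Fset t adj C ∧ (adj j k ∨ k = j)}.ncard}

/-- Two polynomials of degree `≤ t` agreeing on at least `t+1` points
(images of an injective map) are equal. -/
lemma poly_eq_of_agree {F : Type*} [Field F] {n t : ℕ}
    (x : Fin n → F) (hx : Function.Injective x)
    (p q : Polynomial F) (hp : p.degree ≤ (t : WithBot ℕ)) (hq : q.degree ≤ (t : WithBot ℕ))
    (S : Set (Fin n)) (hS : t + 1 ≤ S.ncard)
    (h : ∀ j ∈ S, p.eval (x j) = q.eval (x j)) : p = q := by
  classical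
  have hdiff : (p - q).degree ≤ (t : WithBot ℕ) :=
    (Polynomial.degree_sub_le p q).trans (max_le hp hq)
  have hnd : (p - q).natDegree ≤ t := Polynomial.natDegree_le_iff_degree_le.mpr hdiff
  have hcard : (p - q).natDegree < Fintype.card S := by
    have : S.ncard = Fintype.card S := by
      rw [Set.ncard_eq_toFinset_card', Set.toFinset_card]
    omega
  have hz := Polynomial.eq_zero_of_natDegree_lt_card_of_eval_eq_zero (p - q)
    (f := fun j : S => x j) (fun a b hab => Subtype.ext (hx hab))
    (fun j => by simp [h j j.2]) hcard
  exact sub_eq_zero.mp hz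

/-- Honest parties in the set `𝓔` derived from an `(n,t)`-star hold the same message. -/
theorem E_honest_same_message
    {F : Type*} [Field F] {n t : ℕ} (hn : 3 * t + 1 ≤ n)
    (B : Set (Fin n)) (hB : B.ncard ≤ t)
    (x : Fin n → F) (hx : Function.Injective x)
    (f : Fin n → Polynomial F) (hdeg : ∀ i, (f i).degree ≤ (t : WithBot ℕ))
    (adj : Fin n → Fin n → Prop)
    (hsymm : ∀ i j, adj i j → adj j i) (hirr : ∀ i, ¬ adj i i)
    (hagree : ∀ i ∉ B, ∀ j ∉ B, adj i j →
      (f i).eval (x j) = (f j).eval (x j) ∧ (f i).eval (x i) = (f j).eval (x i))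
    (C D : Set (Fin n)) (hCD : C ⊆ D)
    (hC : n - 2 * t ≤ C.ncard) (hD : n - t ≤ D.ncard)
    (hstar : ∀ i ∈ C, ∀ j ∈ D, i ≠ j → adj i j) :
    (∀ i ∈ Eset t adj C, i ∉ B → ∀ j ∈ Eset t adj C, j ∉ B → f i = f j) ∧
      (∀ i ∈ Eset t adj C, i ∉ B → ∀ k ∈ C, k ∉ B → f i = f k) := by
  classical
  have hdiffcard : ∀ (S : Set (Fin n)) (m : ℕ), m + t ≤ S.ncard → m ≤ (S \ B).ncard := by
    intro S m hm
    have hsub : S ⊆ (S \ B) ∪ B := fun a ha => by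
      by_cases h : a ∈ B
      · exact Or.inr h
      · exact Or.inl ⟨ha, h⟩
    have h1 : S.ncard ≤ (S \ B).ncard + B.ncard :=
      (Set.ncard_le_ncard hsub (Set.toFinite _)).trans (Set.ncard_union_le _ _)
    omega
  -- all honest parties in C hold the same polynomial
  have hCC : ∀ i ∈ C, i ∉ B → ∀ k ∈ C, k ∉ B → f i = f k := by
    intro i hiC hiB k hkC hkB
    apply poly_eq_of_agree x hx _ _ (hdeg i) (hdeg k) (D \ B)
    · apply hdiffcard
      omega
    · intro j hj
      have h1 : (f i).eval (x j) = (f j).eval (x j) := by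
        by_cases hij : i = j
        · subst hij; rfl
        · exact (hagree i hiB j hj.2 (hstar i hiC j hj.1 hij)).1
      have h2 : (f k).eval (x j) = (f j).eval (x j) := by
        by_cases hkj : k = j
        · subst hkj; rfl
        · exact (hagree k hkB j hj.2 (hstar k hkC j hj.1 hkj)).1
      rw [h1, h2]
  -- honest parties in 𝓕 agree with the common polynomial at their own position
  have hF : ∀ j ∈ Fset t adj C, j ∉ B → ∀ k ∈ C, k ∉ B →
      (f j).eval (x j) = (f k).eval (x j) := by
    intro j hjF hjB k hkC hkB
    have hjF' : t + 1 ≤ {k | k ∈ C ∧ (adj j k ∨ k = j)}.ncard := hjF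
    have hMB : ¬ {k | k ∈ C ∧ (adj j k ∨ k = j)} ⊆ B := by
      intro hsub
      have := Set.ncard_le_ncard hsub (Set.toFinite _)
      omega
    obtain ⟨k', hk'M, hk'B⟩ := Set.not_subset.mp hMB
    have heq : (f j).eval (x j) = (f k').eval (x j) := by
      rcases hk'M.2 with hadj | h
      · exact (hagree j hjB k' hk'B hadj).2
      · subst h; rfl
    rw [heq, hCC k' hk'M.1 hk'B k hkC hkB]
  -- honest parties in 𝓔 hold the common polynomial
  have hE : ∀ i ∈ Eset t adj C, i ∉ B → ∀ k ∈ C, k ∉ B → f i = f k := by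
    intro i hiE hiB k hkC hkB
    have hN : 2 * t + 1 ≤ {j | j ∈ Fset t adj C ∧ (adj i j ∨ j = i)}.ncard := hiE
    apply poly_eq_of_agree x hx _ _ (hdeg i) (hdeg k)
      ({j | j ∈ Fset t adj C ∧ (adj i j ∨ j = i)} \ B)
    · apply hdiffcard
      omega
    · intro j hj
      obtain ⟨⟨hjF, hadj⟩, hjB⟩ := hj
      have h1 : (f i).eval (x j) = (f j).eval (x j) := by
        rcases hadj with hadj | h
        · exact (hagree i hiB j hjB hadj).1
        · subst h; rfl
      rw [h1, hF j hjF hjB k hkC hkB]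
  have hCne : ∃ k ∈ C, k ∉ B := by
    by_contra h
    push_neg at h
    have := Set.ncard_le_ncard h (Set.toFinite _)
    omega
  obtain ⟨k₀, hk₀C, hk₀B⟩ := hCne
  exact ⟨fun i hi hiB j hj hjB =>
    (hE i hi hiB k₀ hk₀C hk₀B).trans (hE j hj hjB k₀ hk₀C hk₀B).symm, hE⟩
end

section
/- If the honest parties form a clique in the agreement graph and C contains at least t + 1 honest parties, then the derived sets 𝓕 and 𝓔 contain all honest parties: let adj be a symmetric irreflexive relation on Fin n with n ≥ 3t + 1, let B ⊆ Fin n with |B| ≤ t, suppose adj i j holds for all distinct i, j ∉ B, and let C ⊆ Fin n satisfy |C \ B| ≥ t + 1. Define 𝓕 = {j : the set {k ∈ C : adj j k or k = j} has at least t + 1 elements} and 𝓔 = {j : the set {k ∈ 𝓕 : adj j k or k = j} has at least 2t + 1 elements} (a party counts as its own neighbor in these definitions). Then every party outside B belongs to 𝓕 and to 𝓔; in particular |𝓕| ≥ 2t + 1 and |𝓔| ≥ 2t + 1, so 𝓔 is nonempty. -/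
/-- If the honest parties (those outside the Byzantine set `B`, `|B| ≤ t`, with
`n ≥ 3t + 1`) form a clique in the agreement graph `adj` (symmetric and irreflexive), and
the set `C` contains at least `t + 1` honest parties, then every honest party belongs to
the derived sets `𝓕` and `𝓔`; in particular `|𝓕| ≥ 2t + 1` and `|𝓔| ≥ 2t + 1`, so `𝓔` is
nonempty. -/
theorem honest_in_F_and_E
    {n t : ℕ} (hn : 3 * t + 1 ≤ n)
    (B : Set (Fin n)) (hB : B.ncard ≤ t)
    (adj : Fin n → Fin n → Prop)
    (hsymm : ∀ i j, adj i j → adj j i) (hirr : ∀ i, ¬ adj i i)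
    (hclique : ∀ i ∉ B, ∀ j ∉ B, i ≠ j → adj i j)
    (C : Set (Fin n)) (hC : t + 1 ≤ (C \ B).ncard) :
    (∀ i, i ∉ B → i ∈ Fset t adj C ∧ i ∈ Eset t adj C) ∧
      2 * t + 1 ≤ (Fset t adj C).ncard ∧
      2 * t + 1 ≤ (Eset t adj C).ncard ∧
      (Eset t adj C).Nonempty := by

  have hBc : 2 * t + 1 ≤ Bᶜ.ncard := by
    have h := Set.ncard_add_ncard_compl B
    have : Nat.card (Fin n) = n := by simp
    omega
  have hF : ∀ i, i ∉ B → i ∈ Fset t adj C := by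
    intro i hi
    have hsub : C \ B ⊆ {k | k ∈ C ∧ (adj i k ∨ k = i)} := by
      intro k hk
      refine ⟨hk.1, ?_⟩
      by_cases h : k = i
      · exact Or.inr h
      · exact Or.inl (hsymm _ _ (hclique k hk.2 i hi h))
    exact hC.trans (Set.ncard_le_ncard hsub (Set.toFinite _))
  have hFsub : Bᶜ ⊆ Fset t adj C := fun i hi => hF i hi
  have hE : ∀ i, i ∉ B → i ∈ Eset t adj C := by
    intro i hi
    have hsub : Bᶜ ⊆ {k | k ∈ Fset t adj C ∧ (adj i k ∨ k = i)} := by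
      intro k hk
      refine ⟨hF k hk, ?_⟩
      by_cases h : k = i
      · exact Or.inr h
      · exact Or.inl (hsymm _ _ (hclique k hk i hi h))
    exact hBc.trans (Set.ncard_le_ncard hsub (Set.toFinite _))
  have hEsub : Bᶜ ⊆ Eset t adj C := fun i hi => hE i hi
  have hFcard := hBc.trans (Set.ncard_le_ncard hFsub (Set.toFinite _))
  have hEcard := hBc.trans (Set.ncard_le_ncard hEsub (Set.toFinite _))
  exact ⟨fun i hi => ⟨hF i hi, hE i hi⟩, hFcard, hEcard,
    Set.nonempty_of_ncard_ne_zero (by omega)⟩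
end
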